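/- A finite set of polynomials f₁,…,f_m over a field K has no common zero in the algebraic closure of K (in dimension d) if and only if there exist polynomials h₁,…,h_m ∈ K[X] with 1 = Σᵢ hᵢ fᵢ, i.e. the ideal generated by the fᵢ is all of K[X]. -/

import Mathlib

open scoped BigOperators

/-- Weak Nullstellensatz in certificate form: the polynomials `f i` have no common
zero in the algebraic closure of `K` iff `1` is a combination `Σ h i * f i`,
i.e. the ideal they generate is the whole ring. -/
theorem stmt_5 {K : Type*} [Field K] {d m : ℕ}
    (f : Fin m → MvPolynomial (Fin d) K) :
    (¬ ∃ a : Fin d → AlgebraicClosure K, ∀ i, MvPolynomial.aeval a (f i) = 0) ↔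
      (∃ h : Fin m → MvPolynomial (Fin d) K, ∑ i, h i * f i = 1) := by
  constructor
  · intro hno
    by_contra hne
    -- the ideal generated by the f i is proper
    have hI : Ideal.span (Set.range f) ≠ ⊤ := by
      intro htop
      have h1 : (1 : MvPolynomial (Fin d) K) ∈ Ideal.span (Set.range f) := by
        rw [htop]; trivial
      rw [Ideal.mem_span_range_iff_exists_fun] at h1
      obtain ⟨c, hc⟩ := h1
      exact hne ⟨c, hc⟩
    obtain ⟨P, hPmax, hIP⟩ := Ideal.exists_le_maximal _ hI
    haveI := hPmax
    have hint : RingHom.IsIntegral (algebraMap K (MvPolynomial (Fin d) K ⧸ P)) :=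
      MvPolynomial.quotient_mk_comp_C_isIntegral_of_isJacobsonRing P
    haveI : Algebra.IsIntegral K (MvPolynomial (Fin d) K ⧸ P) := ⟨fun x => hint x⟩
    haveI : Algebra.IsAlgebraic K (MvPolynomial (Fin d) K ⧸ P) :=
      Algebra.IsIntegral.isAlgebraic
    haveI : Module.IsTorsionFree K (MvPolynomial (Fin d) K ⧸ P) :=
      Module.isTorsionFree_iff_algebraMap_injective.mpr
        (algebraMap K (MvPolynomial (Fin d) K ⧸ P)).injective
    let φ : (MvPolynomial (Fin d) K ⧸ P) →ₐ[K] AlgebraicClosure K := IsAlgClosed.lift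
    let ψ : MvPolynomial (Fin d) K →ₐ[K] AlgebraicClosure K :=
      φ.comp (Ideal.Quotient.mkₐ K P)
    refine hno ⟨fun j => ψ (MvPolynomial.X j), fun i => ?_⟩
    show (MvPolynomial.aeval (⇑ψ ∘ MvPolynomial.X)) (f i) = 0
    rw [← MvPolynomial.aeval_unique ψ]
    have hfP : f i ∈ P := hIP (Ideal.subset_span ⟨i, rfl⟩)
    have : (Ideal.Quotient.mkₐ K P) (f i) = 0 := by
      rwa [Ideal.Quotient.mkₐ_eq_mk, Ideal.Quotient.eq_zero_iff_mem]
    show φ ((Ideal.Quotient.mkₐ K P) (f i)) = 0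
    rw [this, map_zero]
  · rintro ⟨h, hh⟩ ⟨a, ha⟩
    have := congrArg (MvPolynomial.aeval a) hh
    simp [ha] at this
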